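/- Pointwise uniformity from small Fourier coefficients: Let n ≥ 2 and let J be a nonempty finite index set with |J| ≤ n. Let D be a probability distribution on {0,1}^J such that for every nonempty I ⊆ J, |Σ_{z ∈ {0,1}^J} D(z) · (−1)^(Σ_{i∈I} z_i)| ≤ n^(−5|I|). Then for every z ∈ {0,1}^J, |D(z) − 2^(−|J|)| ≤ (1/n³) · 2^(−|J|); that is, D is 1/n³-pointwise-close to the uniform distribution on {0,1}^J. -/

import Mathlib

open Finset

/-- **Pointwise uniformity from small Fourier coefficients.** Let `n ≥ 2` and `J` a
nonempty finite index set with `|J| ≤ n`. If a probability distribution `D` on `{0,1}^J`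
satisfies `|Σ_z D(z)·(−1)^(Σ_{i∈I} z_i)| ≤ n^(−5|I|)` for every nonempty `I ⊆ J`, then
`|D(z) − 2^(−|J|)| ≤ (1/n³)·2^(−|J|)` for every `z`, i.e. `D` is `1/n³`-pointwise-close
to uniform. -/
theorem pointwise_uniformity_from_parities (n : ℕ) (hn : 2 ≤ n)
    (J : Type) [Fintype J] [DecidableEq J] [Nonempty J]
    (hJ : Fintype.card J ≤ n)
    (D : (J → Bool) → ℝ)
    (hD0 : ∀ z, 0 ≤ D z) (hD1 : ∑ z, D z = 1)
    (hFourier : ∀ I : Finset J, I.Nonempty →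
      |∑ z, D z * (-1 : ℝ) ^ (∑ i ∈ I, if z i then 1 else 0)| ≤
        (n : ℝ) ^ (-(5 * (I.card : ℝ)))) :
    ∀ z : J → Bool,
      |D z - (2 : ℝ) ^ (-(Fintype.card J : ℝ))| ≤
        (1 / (n : ℝ) ^ 3) * (2 : ℝ) ^ (-(Fintype.card J : ℝ)) := by
  intro z
  set m := Fintype.card J with hm
  have hnpos : (0:ℝ) < n := by positivity
  have hrpow : (2 : ℝ) ^ (-(m : ℝ)) = ((2:ℝ)^m)⁻¹ := by
    rw [← Real.rpow_natCast 2 m, ← Real.rpow_neg (by norm_num)]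
  set χ : Finset J → (J → Bool) → ℝ :=
    fun I w => (-1 : ℝ) ^ (∑ i ∈ I, if w i then 1 else 0) with hχ
  -- orthogonality
  have horth : ∀ w : J → Bool,
      ∑ I ∈ (univ : Finset J).powerset, χ I w * χ I z
        = if w = z then (2:ℝ)^m else 0 := by
    intro w
    have h1 : ∀ I : Finset J, χ I w * χ I z
        = ∏ i ∈ I, ((-1:ℝ) ^ (if w i then 1 else 0) * (-1:ℝ) ^ (if z i then 1 else 0)) := by
      intro I
      rw [hχ]
      simp only [← prod_pow_eq_pow_sum, prod_mul_distrib]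
    have h2 : ∑ I ∈ (univ : Finset J).powerset, χ I w * χ I z
        = ∏ i ∈ (univ : Finset J),
            (((-1:ℝ) ^ (if w i then 1 else 0) * (-1:ℝ) ^ (if z i then 1 else 0)) + 1) := by
      rw [prod_add]
      simp [h1]
    rw [h2]
    by_cases hwz : w = z
    · subst hwz
      have hall : ∀ i ∈ (univ : Finset J), ((-1:ℝ) ^ (if w i then 1 else 0) * (-1:ℝ) ^ (if w i then 1 else 0)) + 1 = 2 := by
        intro i _; by_cases h : w i <;> simp [h] <;> norm_num
      rw [if_pos rfl, Finset.prod_congr rfl hall, prod_const, card_univ, ← hm]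
    · rw [if_neg hwz]
      obtain ⟨i0, hi0⟩ : ∃ i, w i ≠ z i := by
        by_contra h; push_neg at h; exact hwz (funext h)
      refine prod_eq_zero (mem_univ i0) ?_
      rcases Bool.eq_false_or_eq_true (w i0) with h | h <;>
        rcases Bool.eq_false_or_eq_true (z i0) with h' | h' <;>
        simp [h, h'] at hi0 ⊢
  -- inversion
  have hinv : ∑ I ∈ (univ : Finset J).powerset, (∑ w, D w * χ I w) * χ I z
      = (2:ℝ)^m * D z := by
    calc ∑ I ∈ (univ : Finset J).powerset, (∑ w, D w * χ I w) * χ I z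
        = ∑ I ∈ (univ : Finset J).powerset, ∑ w, D w * (χ I w * χ I z) := by
          simp [Finset.sum_mul, mul_assoc]
      _ = ∑ w, ∑ I ∈ (univ : Finset J).powerset, D w * (χ I w * χ I z) := by
          rw [Finset.sum_comm]
      _ = ∑ w, D w * (if w = z then (2:ℝ)^m else 0) := by
          simp only [← Finset.mul_sum, horth]
      _ = (2:ℝ)^m * D z := by
          simp only [mul_ite, mul_zero]
          rw [Finset.sum_ite_eq' Finset.univ z (fun w => D w * (2:ℝ)^m)]
          simp [mul_comm]
  -- split off the empty set
  have hmem : (∅ : Finset J) ∈ (univ : Finset J).powerset := by simp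
  have hsplit : ∑ I ∈ (univ : Finset J).powerset, (∑ w, D w * χ I w) * χ I z
      = 1 + ∑ I ∈ ((univ : Finset J).powerset).erase ∅, (∑ w, D w * χ I w) * χ I z := by
    rw [← Finset.add_sum_erase _ _ hmem]
    congr 1
    simp [hχ, hD1]
  have key : (2:ℝ)^m * D z - 1
      = ∑ I ∈ ((univ : Finset J).powerset).erase ∅, (∑ w, D w * χ I w) * χ I z := by
    rw [← hinv, hsplit]; ring
  -- bound each Fourier coefficient
  set x : ℝ := ((n:ℝ)^5)⁻¹ with hx
  have hxpos : 0 < x := by positivity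
  have hbd : ∀ I ∈ ((univ : Finset J).powerset).erase ∅,
      |(∑ w, D w * χ I w) * χ I z| ≤ x ^ I.card := by
    intro I hI
    have hne : I.Nonempty := Finset.nonempty_of_ne_empty (Finset.ne_of_mem_erase hI)
    have h1 := hFourier I hne
    have h2 : (n : ℝ) ^ (-(5 * (I.card : ℝ))) = x ^ I.card := by
      have hcast : -(5 * (I.card : ℝ)) = -((5 * I.card : ℕ) : ℝ) := by push_cast; ring
      rw [hcast, Real.rpow_neg hnpos.le, Real.rpow_natCast, pow_mul, hx, ← inv_pow]
    have hχ1 : |χ I z| = 1 := by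
      rw [hχ]; simp [abs_pow]
    rw [abs_mul, hχ1, mul_one]
    rw [h2] at h1
    exact h1
  -- sum the bound via binomial theorem
  have hsum1 : ∑ I ∈ ((univ : Finset J).powerset).erase ∅, x ^ I.card
      = ∑ k ∈ Finset.range m, (m.choose (k+1) : ℝ) * x ^ (k+1) := by
    have e1 : ∑ I ∈ (univ : Finset J).powerset, x ^ I.card = (x + 1)^m := by
      have hpa := prod_add (fun _ : J => x) (fun _ : J => 1) (univ : Finset J)
      simp only [prod_const, one_pow, mul_one] at hpa
      rw [← hpa, card_univ, ← hm]
    have e2 : (x + 1)^m = ∑ k ∈ Finset.range (m+1), x ^ k * (m.choose k : ℝ) := by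
      rw [add_pow]; simp
    have e3 : ∑ I ∈ (univ : Finset J).powerset, x ^ I.card
        = 1 + ∑ I ∈ ((univ : Finset J).powerset).erase ∅, x ^ I.card := by
      rw [← Finset.add_sum_erase _ _ hmem]; simp
    have e4 : ∑ k ∈ Finset.range (m+1), x ^ k * (m.choose k : ℝ)
        = ∑ k ∈ Finset.range m, x ^ (k+1) * (m.choose (k+1) : ℝ) + 1 := by
      rw [Finset.sum_range_succ']; simp
    have h := e3.symm.trans (e1.trans (e2.trans e4))
    have e5 : ∑ I ∈ ((univ : Finset J).powerset).erase ∅, x ^ I.card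
        = ∑ k ∈ Finset.range m, x ^ (k+1) * (m.choose (k+1) : ℝ) := by linarith
    rw [e5]
    exact Finset.sum_congr rfl fun k _ => by ring
  have hterm : ∀ k ∈ Finset.range m, (m.choose (k+1) : ℝ) * x ^ (k+1)
      ≤ ((n:ℝ)^4)⁻¹ * (1/2 : ℝ)^k := by
    intro k _
    have hc : (m.choose (k+1) : ℝ) ≤ (n:ℝ)^(k+1) := by
      calc (m.choose (k+1) : ℝ) ≤ (m:ℝ)^(k+1) := by
            exact_mod_cast Nat.choose_le_pow m (k+1)
        _ ≤ (n:ℝ)^(k+1) := by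
            apply pow_le_pow_left₀ (by positivity) (by exact_mod_cast hJ)
    calc (m.choose (k+1) : ℝ) * x ^ (k+1) ≤ (n:ℝ)^(k+1) * x ^ (k+1) := by
          apply mul_le_mul_of_nonneg_right hc (by positivity)
      _ = (((n:ℝ)^4)⁻¹)^(k+1) := by
          rw [hx, ← mul_pow]
          congr 1
          have hne0 : (n:ℝ) ≠ 0 := ne_of_gt hnpos
          have h5 : (n:ℝ)^5 = (n:ℝ) * (n:ℝ)^4 := by ring
          rw [h5, mul_inv, ← mul_assoc, mul_inv_cancel₀ hne0, one_mul]
      _ = ((n:ℝ)^4)⁻¹ * (((n:ℝ)^4)⁻¹)^k := by ring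
      _ ≤ ((n:ℝ)^4)⁻¹ * (1/2 : ℝ)^k := by
          apply mul_le_mul_of_nonneg_left _ (by positivity)
          apply pow_le_pow_left₀ (by positivity)
          have h2n : (2:ℝ) ≤ (n:ℝ)^4 := by
            calc (2:ℝ) ≤ (n:ℝ) := by exact_mod_cast hn
              _ ≤ (n:ℝ)^4 := le_self_pow₀ (by exact_mod_cast Nat.one_le_of_lt hn) (by norm_num)
          calc ((n:ℝ)^4)⁻¹ ≤ (2:ℝ)⁻¹ := by
                apply inv_anti₀ (by norm_num) h2n
            _ = 1/2 := by norm_num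
  -- final bound on the sum
  have hS : |(2:ℝ)^m * D z - 1| ≤ 1 / (n:ℝ)^3 := by
    rw [key]
    calc |∑ I ∈ ((univ : Finset J).powerset).erase ∅, (∑ w, D w * χ I w) * χ I z|
        ≤ ∑ I ∈ ((univ : Finset J).powerset).erase ∅, |(∑ w, D w * χ I w) * χ I z| :=
          Finset.abs_sum_le_sum_abs _ _
      _ ≤ ∑ I ∈ ((univ : Finset J).powerset).erase ∅, x ^ I.card :=
          Finset.sum_le_sum hbd
      _ = ∑ k ∈ Finset.range m, (m.choose (k+1) : ℝ) * x ^ (k+1) := hsum1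
      _ ≤ ∑ k ∈ Finset.range m, ((n:ℝ)^4)⁻¹ * (1/2 : ℝ)^k := Finset.sum_le_sum hterm
      _ = ((n:ℝ)^4)⁻¹ * ∑ k ∈ Finset.range m, (1/2 : ℝ)^k := by rw [Finset.mul_sum]
      _ ≤ ((n:ℝ)^4)⁻¹ * 2 := by
          apply mul_le_mul_of_nonneg_left (sum_geometric_two_le m) (by positivity)
      _ ≤ 1 / (n:ℝ)^3 := by
          rw [mul_comm, ← div_eq_mul_inv, div_le_div_iff₀ (by positivity) (by positivity)]
          have hn2 : (2:ℝ) ≤ (n:ℝ) := by exact_mod_cast hn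
          have h3 : (0:ℝ) ≤ (n:ℝ)^3 := by positivity
          nlinarith [mul_nonneg (by linarith : (0:ℝ) ≤ (n:ℝ) - 2) h3]
  -- conclude
  have h2mpos : (0:ℝ) < (2:ℝ)^m := by positivity
  have hfin : D z - (2:ℝ) ^ (-(m : ℝ)) = ((2:ℝ)^m * D z - 1) * ((2:ℝ)^m)⁻¹ := by
    rw [hrpow]; field_simp
  rw [hfin, abs_mul, abs_of_pos (inv_pos.mpr h2mpos), hrpow]
  exact mul_le_mul_of_nonneg_right hS (by positivity)
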